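/- A finite group G is an A-group (all of its Sylow subgroups are abelian) if and only if Nil_G(x) = C_G(x) for every element x ∈ G of prime power order. -/

import Mathlib

/-- The nilpotent neighborhood of `x`: elements `y` such that `⟨x,y⟩` is nilpotent. -/
def nilNbhd {G : Type*} [Group G] (x : G) : Set G :=
  {y | Group.IsNilpotent ↥(Subgroup.closure ({x, y} : Set G))}

/-- The hypercenter of a finite group: the stable term of the upper central series. -/
noncomputable def hypercenter (G : Type*) [Group G] : Subgroup G :=
  upperCentralSeries G (Nat.card G)

instance hypercenter_normal (G : Type*) [Group G] : (hypercenter G).Normal :=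
  Subgroup.normal_of_characteristic (Subgroup.upperCentralSeries G (Nat.card G))

/-- The graph Γ(G): induced subgraph of the nilpotent graph on `G \ Z_∞(G)`. -/
def nilGraph (G : Type*) [Group G] : SimpleGraph {x : G // x ∉ hypercenter G} where
  Adj a b := a ≠ b ∧ Group.IsNilpotent ↥(Subgroup.closure ({a.1, b.1} : Set G))
  symm := ⟨fun a b ⟨h1, h2⟩ => ⟨h1.symm, by rwa [Set.pair_comm]⟩⟩
  loopless := ⟨fun a h => h.1 rfl⟩

/-- The commuting graph on the non-central elements. -/
def commGraph (G : Type*) [Group G] : SimpleGraph {x : G // x ∉ Subgroup.center G} where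
  Adj a b := a ≠ b ∧ a.1 * b.1 = b.1 * a.1
  symm := ⟨fun a b ⟨h1, h2⟩ => ⟨h1.symm, h2.symm⟩⟩
  loopless := ⟨fun a h => h.1 rfl⟩

/-- Diameter of a connected component: diameter of the induced subgraph on its support. -/
noncomputable def compDiam {V : Type*} (Γ : SimpleGraph V) (c : Γ.ConnectedComponent) : ℕ :=
  (Γ.induce c.supp).diam

/-- `H` is a Frobenius complement in `G`. -/
def IsFrobeniusComplement {G : Type*} [Group G] (H : Subgroup G) : Prop :=
  H ≠ ⊥ ∧ H ≠ ⊤ ∧ ∀ g : G, g ∉ H → H ⊓ H.map (MulAut.conj g).toMonoidHom = ⊥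

/-- `G` is a Frobenius group. -/
def IsFrobenius (G : Type*) [Group G] : Prop :=
  ∃ H : Subgroup G, IsFrobeniusComplement H

/-- `K` is the Frobenius kernel corresponding to the complement `H`. -/
def IsFrobeniusKernelOf {G : Type*} [Group G] (K H : Subgroup G) : Prop :=
  IsFrobeniusComplement H ∧
    (K : Set G) = {1} ∪ {x : G | ∀ g : G, x ∉ H.map (MulAut.conj g).toMonoidHom}

/-- `K` is a Frobenius kernel of `G`. -/
def IsFrobeniusKernel {G : Type*} [Group G] (K : Subgroup G) : Prop :=
  ∃ H : Subgroup G, IsFrobeniusKernelOf K H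

/-- `G` is a 2-Frobenius group. -/
def IsTwoFrobenius (G : Type*) [Group G] : Prop :=
  ∃ K L : Subgroup G, ∃ hK : K.Normal, L.Normal ∧ K ≤ L ∧
    IsFrobeniusKernel (K.subgroupOf L) ∧
    (haveI := hK; IsFrobeniusKernel (Subgroup.map (QuotientGroup.mk' K) L))

/-- The Fitting subgroup: the largest normal nilpotent subgroup (of a finite group). -/
def fitting (G : Type*) [Group G] : Subgroup G :=
  sSup {H : Subgroup G | H.Normal ∧ Group.IsNilpotent ↥H}

lemma isCommutative_of_le {G : Type*} [Group G] {K H : Subgroup G} (hKH : K ≤ H)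
    [h : IsMulCommutative ↥H] : IsMulCommutative ↥K :=
  ⟨⟨fun a b => Subtype.ext (Subgroup.mul_comm_of_mem_isMulCommutative H (hKH a.2) (hKH b.2))⟩⟩

lemma comm_of_nilpotent {H : Type*} [Group H] [Finite H] (hnil : Group.IsNilpotent H)
    (hsyl : ∀ q : ℕ, q.Prime → ∀ Q : Sylow q H, IsMulCommutative ↥(Q : Subgroup H))
    (a b : H) : a * b = b * a := by
  obtain ⟨e⟩ := ((isNilpotent_of_finite_tfae (G := H)).out 0 4).mp hnil
  have key : e.symm a * e.symm b = e.symm b * e.symm a := by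
    funext p P
    haveI := hsyl p (Nat.prime_of_mem_primeFactors p.2) P
    exact Subtype.ext (Subgroup.mul_comm_of_mem_isMulCommutative (P : Subgroup H)
      (e.symm a p P).2 (e.symm b p P).2)
  calc a * b = e (e.symm a * e.symm b) := by simp
    _ = e (e.symm b * e.symm a) := congrArg e key
    _ = b * a := by simp


/-- A finite group is an A-group iff `Nil_G(x) = C_G(x)` for every `x` of prime power order. -/
theorem stmt_8 (G : Type*) [Group G] [Finite G] :
    (∀ (p : ℕ), p.Prime → ∀ P : Sylow p G, IsMulCommutative ↥(P : Subgroup G)) ↔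
      ∀ x : G, IsPrimePow (orderOf x) →
        nilNbhd x = (Subgroup.centralizer {x} : Set G) := by
  constructor
  · intro hSyl x _hx
    ext y
    constructor
    · intro (hy : Group.IsNilpotent ↥(Subgroup.closure ({x, y} : Set G)))
      set H := Subgroup.closure ({x, y} : Set G) with hH
      -- every Sylow subgroup of H is commutative
      have hsyl : ∀ q : ℕ, q.Prime → ∀ Q : Sylow q H, IsMulCommutative ↥(Q : Subgroup H) := by
        intro q hq Q
        haveI := Fact.mk hq
        have h1 : IsPGroup q ((Q : Subgroup H).map H.subtype) := Q.isPGroup'.map H.subtype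
        obtain ⟨R, hR⟩ := h1.exists_le_sylow
        haveI := hSyl q hq R
        refine ⟨⟨fun a b => Subtype.ext (Subtype.ext ?_)⟩⟩
        have ha : (a : H).1 ∈ (R : Subgroup G) :=
          hR ⟨(a : H), a.2, rfl⟩
        have hb : (b : H).1 ∈ (R : Subgroup G) :=
          hR ⟨(b : H), b.2, rfl⟩
        exact Subgroup.mul_comm_of_mem_isMulCommutative (R : Subgroup G) ha hb
      have hx' : x ∈ H := Subgroup.subset_closure (Set.mem_insert _ _)
      have hy' : y ∈ H := Subgroup.subset_closure (Set.mem_insert_of_mem _ rfl)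
      have := comm_of_nilpotent hy hsyl ⟨x, hx'⟩ ⟨y, hy'⟩
      have hcomm : x * y = y * x := congrArg Subtype.val this
      exact Subgroup.mem_centralizer_singleton_iff.mpr hcomm.symm
    · intro hy
      have hy' : y ∈ Subgroup.centralizer {x} := hy
      have hcomm : x * y = y * x := (Subgroup.mem_centralizer_singleton_iff.mp hy').symm
      -- closure {x, y} is commutative
      have hsub : ∀ s ∈ ({x, y} : Set G), Subgroup.closure ({x, y} : Set G) ≤
          Subgroup.centralizer {s} := by
        rintro s hs
        refine (Subgroup.closure_le _).mpr ?_
        rintro t ht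
        rcases hs with rfl | hs
        · rcases ht with rfl | ht
          · exact Subgroup.mem_centralizer_singleton_iff.mpr rfl
          · rw [Set.mem_singleton_iff] at ht; subst ht
            exact Subgroup.mem_centralizer_singleton_iff.mpr hcomm.symm
        · rw [Set.mem_singleton_iff] at hs; subst hs
          rcases ht with rfl | ht
          · exact Subgroup.mem_centralizer_singleton_iff.mpr hcomm
          · rw [Set.mem_singleton_iff] at ht; subst ht
            exact Subgroup.mem_centralizer_singleton_iff.mpr rfl
      have hcommutative : IsMulCommutative ↥(Subgroup.closure ({x, y} : Set G)) := by
        rw [← Subgroup.le_centralizer_iff_isMulCommutative]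
        refine (Subgroup.closure_le _).mpr ?_
        intro s hs
        rw [SetLike.mem_coe, Subgroup.mem_centralizer_iff]
        intro h hh
        have := hsub s hs hh
        exact (Subgroup.mem_centralizer_singleton_iff.mp this)
      haveI := hcommutative
      refine ⟨⟨1, ?_⟩⟩
      rw [upperCentralSeries_one]
      rw [Subgroup.eq_top_iff']
      intro g
      rw [Subgroup.mem_center_iff]
      intro m
      exact Subtype.ext (Subgroup.mul_comm_of_mem_isMulCommutative _ m.2 g.2)
  · intro h p hp P
    haveI := Fact.mk hp
    refine ⟨⟨fun a b => ?_⟩⟩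
    by_cases ha1 : (a : G) = 1
    · apply Subtype.ext
      simp [ha1]
    · obtain ⟨k, hk⟩ := IsPGroup.iff_orderOf.mp P.isPGroup' a
      have hk0 : k ≠ 0 := by
        rintro rfl
        exact ha1 (by simpa using orderOf_eq_one_iff.mp (by simpa using hk))
      have hord : orderOf (a : G) = p ^ k := by
        rw [← hk]
        exact (orderOf_injective ((P : Subgroup G).subtype) (Subgroup.subtype_injective _) a)
      have hpp : IsPrimePow (orderOf (a : G)) :=
        ⟨p, k, hp.prime, Nat.pos_of_ne_zero hk0, hord.symm⟩
      have hle : Subgroup.closure ({(a : G), (b : G)} : Set G) ≤ (P : Subgroup G) := by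
        refine (Subgroup.closure_le _).mpr ?_
        rintro t (rfl | ht)
        · exact a.2
        · rw [Set.mem_singleton_iff] at ht; subst ht; exact b.2
      have hnil : Group.IsNilpotent ↥(Subgroup.closure ({(a : G), (b : G)} : Set G)) :=
        (P.isPGroup'.to_le hle).isNilpotent
      have hb : (b : G) ∈ nilNbhd (a : G) := hnil
      rw [h (a : G) hpp] at hb
      exact Subtype.ext (Subgroup.mem_centralizer_singleton_iff.mp hb).symm
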